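/- arXiv:1904.06021 — 6 statements merged into one kernel-verified Lean document; each statement's English description precedes it below -/
import Mathlib

section
/- Let (S₁, v₁) and (S₂, v₂) be based big-trees. There exists g ∈ G with g•S₁ = S₂ and g•v₁ = v₂ if and only if there exist g₁, g₂ ∈ G and a vertex w with g₁•v₁ = g₂•v₂ = w such that the subgroups g₁ PStab(S₁) g₁⁻¹ and g₂ PStab(S₂) g₂⁻¹ of Stab(w) are conjugate by an element of Stab(w). -/
open MulAction Pointwise

/-- The pointwise stabilizer of a set of vertices `S`. -/
def PStab (G : Type*) [Group G] {V : Type*} [MulAction G V] (S : Set V) : Subgroup G :=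
  ⨅ v ∈ S, MulAction.stabilizer G v

/-- `S` is a subtree of `T`: it is nonempty and its induced subgraph is connected. -/
def IsSubtree {V : Type*} (T : SimpleGraph V) (S : Set V) : Prop :=
  S.Nonempty ∧ (T.induce S).Connected

/-- `S` is a nontrivial subtree: a subtree containing two adjacent vertices. -/
def IsNontrivialSubtree {V : Type*} (T : SimpleGraph V) (S : Set V) : Prop :=
  IsSubtree T S ∧ ∃ u ∈ S, ∃ v ∈ S, T.Adj u v

/-- `S` is a big-tree: a nontrivial subtree with infinite pointwise stabilizer, not properly
contained in a subtree with the same pointwise stabilizer. -/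
def IsBigTree (G : Type*) [Group G] {V : Type*} [MulAction G V]
    (T : SimpleGraph V) (S : Set V) : Prop :=
  IsNontrivialSubtree T S ∧ ((PStab G S : Subgroup G) : Set G).Infinite ∧
    ¬ ∃ S' : Set V, IsSubtree T S' ∧ S ⊂ S' ∧ PStab G S' = PStab G S

/-- Conjugation of a subgroup: `conjSub g H = g H g⁻¹`. -/
def conjSub {G : Type*} [Group G] (g : G) (H : Subgroup G) : Subgroup G :=
  H.map (MulAut.conj g).toMonoidHom

section Aux

variable {G V : Type*} [Group G] [MulAction G V]

lemma mem_PStab {S : Set V} {x : G} : x ∈ PStab G S ↔ ∀ v ∈ S, x • v = v := by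
  simp [PStab, Subgroup.mem_iInf, MulAction.mem_stabilizer_iff]

lemma mem_conjSub {G : Type*} [Group G] {g x : G} {H : Subgroup G} :
    x ∈ conjSub g H ↔ g⁻¹ * x * g ∈ H := by
  constructor
  · rintro ⟨h, hh, rfl⟩
    simpa [MulAut.conj, mul_assoc] using hh
  · intro h
    exact ⟨g⁻¹ * x * g, h, by simp [MulAut.conj]; group⟩

lemma conjSub_conjSub {G : Type*} [Group G] (x g : G) (H : Subgroup G) :
    conjSub x (conjSub g H) = conjSub (x * g) H := by
  ext y
  simp only [mem_conjSub, mul_inv_rev, mul_assoc]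

lemma conjSub_one {G : Type*} [Group G] (H : Subgroup G) : conjSub 1 H = H := by
  ext y; simp [mem_conjSub]

lemma PStab_smul (g : G) (S : Set V) : PStab G (g • S) = conjSub g (PStab G S) := by
  ext x
  rw [mem_conjSub, mem_PStab, mem_PStab]
  constructor
  · intro h v hv
    have := h (g • v) ⟨v, hv, rfl⟩
    rw [mul_smul, mul_smul, inv_smul_eq_iff, this]
  · rintro h v ⟨u, hu, rfl⟩
    have := h u hu
    rw [mul_smul, mul_smul, inv_smul_eq_iff] at this
    exact this

lemma isSubtree_smul {T : SimpleGraph V}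
    (hadj : ∀ (g : G) (u v : V), T.Adj u v ↔ T.Adj (g • u) (g • v))
    {S : Set V} (h : IsSubtree T S) (g : G) : IsSubtree T (g • S) := by
  obtain ⟨hne, hconn⟩ := h
  refine ⟨hne.smul_set, ?_⟩
  have e : T.induce S ≃g T.induce (g • S) :=
    { toEquiv := Equiv.subtypeEquiv (MulAction.toPerm g) (fun v => by
        simp [MulAction.toPerm, Set.smul_mem_smul_set_iff])
      map_rel_iff' := by
        rintro ⟨u, hu⟩ ⟨v, hv⟩
        simp [SimpleGraph.comap, MulAction.toPerm, ← hadj g u v] }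
  exact (SimpleGraph.Iso.connected_iff e).mp hconn

lemma isBigTree_smul {T : SimpleGraph V}
    (hadj : ∀ (g : G) (u v : V), T.Adj u v ↔ T.Adj (g • u) (g • v))
    {S : Set V} (h : IsBigTree G T S) (g : G) : IsBigTree G T (g • S) := by
  obtain ⟨⟨hsub, u, hu, v, hv, huv⟩, hinf, hmax⟩ := h
  refine ⟨⟨isSubtree_smul hadj hsub g, g • u, ⟨u, hu, rfl⟩, g • v, ⟨v, hv, rfl⟩,
      (hadj g u v).mp huv⟩, ?_, ?_⟩
  · rw [PStab_smul]
    have : ((conjSub g (PStab G S) : Subgroup G) : Set G)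
        = (fun y => g * y * g⁻¹) '' (PStab G S : Set G) := by
      ext y
      simp only [SetLike.mem_coe, mem_conjSub, Set.mem_image]
      constructor
      · intro hy; exact ⟨g⁻¹ * y * g, hy, by group⟩
      · rintro ⟨z, hz, rfl⟩; simpa [mul_assoc] using hz
    rw [this]
    exact hinf.image (fun a _ b _ hab => by
      have := congrArg (fun t => g⁻¹ * t * g) hab
      simpa [mul_assoc] using this)
  · rintro ⟨S', hS', hss, hP⟩
    refine hmax ⟨g⁻¹ • S', isSubtree_smul hadj hS' g⁻¹, ?_, ?_⟩
    · have e : g • (g⁻¹ • S') = S' := by rw [← mul_smul]; simp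
      constructor
      · rw [← Set.smul_set_subset_smul_set_iff (a := g), e]
        exact hss.1
      · intro hsub'
        rw [← Set.smul_set_subset_smul_set_iff (a := g), e] at hsub'
        exact hss.2 hsub'
    · have : PStab G (g⁻¹ • S') = conjSub g⁻¹ (PStab G S') := PStab_smul g⁻¹ S'
      rw [this, hP, PStab_smul, conjSub_conjSub, inv_mul_cancel, conjSub_one]

/-- Two big-trees sharing a vertex and having equal pointwise stabilizers are equal. -/
lemma bigTree_eq_of_mem_of_PStab_eq {T : SimpleGraph V} {S S' : Set V} {w : V}
    (h : IsBigTree G T S) (h' : IsBigTree G T S') (hw : w ∈ S) (hw' : w ∈ S')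
    (hP : PStab G S = PStab G S') : S = S' := by
  have hunion : IsSubtree T (S ∪ S') :=
    ⟨⟨w, Or.inl hw⟩, SimpleGraph.induce_union_connected h.1.1.2.preconnected h'.1.1.2.preconnected ⟨w, hw, hw'⟩⟩
  have hPU : PStab G (S ∪ S') = PStab G S := by
    ext x
    simp only [mem_PStab, Set.mem_union]
    constructor
    · intro hx v hv; exact hx v (Or.inl hv)
    · intro hx v hv
      rcases hv with hv | hv
      · exact hx v hv
      · exact (mem_PStab.mp ((hP ▸ mem_PStab.mpr hx : x ∈ PStab G S'))) v hv
  have h1 : S ∪ S' = S := by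
    by_contra hne
    exact h.2.2 ⟨S ∪ S', hunion, ⟨Set.subset_union_left, fun hsub =>
      hne (Set.Subset.antisymm hsub Set.subset_union_left)⟩, hPU⟩
  have h2 : S ∪ S' = S' := by
    by_contra hne
    have hPU' : PStab G (S ∪ S') = PStab G S' := hPU.trans hP
    exact h'.2.2 ⟨S ∪ S', hunion, ⟨Set.subset_union_right, fun hsub =>
      hne (Set.Subset.antisymm hsub Set.subset_union_right)⟩, hPU'⟩
  rw [← h1, h2]

end Aux

/-- for based big-trees `(S₁, v₁)` and `(S₂, v₂)`, there is `g ∈ G` with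
`g • S₁ = S₂` and `g • v₁ = v₂` iff there are `g₁, g₂ ∈ G` and a vertex `w` with
`g₁ • v₁ = g₂ • v₂ = w` such that the subgroups `g₁ PStab(S₁) g₁⁻¹` and `g₂ PStab(S₂) g₂⁻¹`
of `Stab(w)` are conjugate by an element of `Stab(w)`. -/
theorem basedBigTree_orbit_iff_conjugate {G V : Type*} [Group G] [MulAction G V]
    (T : SimpleGraph V) (htree : T.IsTree)
    (hadj : ∀ (g : G) (u v : V), T.Adj u v ↔ T.Adj (g • u) (g • v))
    (hninv : ¬ ∃ (g : G) (u v : V), T.Adj u v ∧ g • u = v ∧ g • v = u)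
    (S₁ S₂ : Set V) (v₁ v₂ : V)
    (h₁ : IsBigTree G T S₁) (h₂ : IsBigTree G T S₂) (hv₁ : v₁ ∈ S₁) (hv₂ : v₂ ∈ S₂) :
    (∃ g : G, g • S₁ = S₂ ∧ g • v₁ = v₂) ↔
      ∃ (g₁ g₂ : G) (w : V), g₁ • v₁ = w ∧ g₂ • v₂ = w ∧
        ∃ x ∈ MulAction.stabilizer G w,
          conjSub x (conjSub g₁ (PStab G S₁)) = conjSub g₂ (PStab G S₂) := by
  constructor
  · rintro ⟨g, hS, hv⟩
    refine ⟨g, 1, v₂, hv, one_smul _ _, 1, one_mem _, ?_⟩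
    rw [conjSub_one, conjSub_one, ← PStab_smul, hS]
  · rintro ⟨g₁, g₂, w, hw₁, hw₂, x, hx, hconj⟩
    refine ⟨g₂⁻¹ * (x * g₁), ?_, ?_⟩
    · have key : (x * g₁) • S₁ = g₂ • S₂ := by
        apply bigTree_eq_of_mem_of_PStab_eq (T := T)
          (isBigTree_smul hadj h₁ (x * g₁)) (isBigTree_smul hadj h₂ g₂)
          (w := w) ⟨v₁, hv₁, by show (x * g₁) • v₁ = w; rw [mul_smul, hw₁]; exact hx⟩ ⟨v₂, hv₂, hw₂⟩
        rw [PStab_smul, PStab_smul, ← conjSub_conjSub, hconj]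
      rw [mul_smul, key, inv_smul_smul]
    · rw [mul_smul, mul_smul, hw₁, hx, ← hw₂, inv_smul_smul]
end

section
/- Let S₁ be a lowest big-tree and let S₂ be a nontrivial subtree. If PStab(S₁) ∩ PStab(S₂) is infinite, then S₂ ⊆ S₁; in particular PStab(S₁) ≤ PStab(S₂). -/
open MulAction Pointwise

/-- A big-tree is lowest if it is not properly contained in another big-tree. -/
def IsLowestBigTree (G : Type*) [Group G] {V : Type*} [MulAction G V]
    (T : SimpleGraph V) (S : Set V) : Prop :=
  IsBigTree G T S ∧ ¬ ∃ S' : Set V, IsBigTree G T S' ∧ S ⊂ S'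

private lemma list_map_eq_self {α : Type*} {f : α → α} :
    ∀ {l : List α}, List.map f l = l → ∀ x ∈ l, f x = x
  | [], _, x, hx => by simp at hx
  | a :: l, h, x, hx => by
    simp only [List.map_cons, List.cons.injEq] at h
    rcases List.mem_cons.mp hx with rfl | hx
    · exact h.1
    · exact list_map_eq_self h.2 x hx

private lemma mem_pstab_iff {G : Type*} [Group G] {V : Type*} [MulAction G V]
    {S : Set V} {g : G} : g ∈ PStab G S ↔ ∀ v ∈ S, g • v = v := by
  simp [PStab, Subgroup.mem_iInf, MulAction.mem_stabilizer_iff]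

/-- If `g` acts as a graph automorphism fixing the endpoints of a path in a tree,
it fixes every vertex of the path. -/
private lemma fix_path {G V : Type*} [Group G] [MulAction G V]
    {T : SimpleGraph V} (htree : T.IsTree)
    (hadj : ∀ (g : G) (u v : V), T.Adj u v ↔ T.Adj (g • u) (g • v))
    {g : G} {u v : V} (hu : g • u = u) (hv : g • v = v)
    {p : T.Walk u v} (hp : p.IsPath) : ∀ w ∈ p.support, g • w = w := by
  let f : T →g T := ⟨fun x => g • x, fun h => (hadj g _ _).mp h⟩
  have hfinj : Function.Injective f := MulAction.injective g
  have hq : ((p.map f).copy hu hv).IsPath := by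
    rw [SimpleGraph.Walk.isPath_copy]
    exact SimpleGraph.Walk.map_isPath_of_injective hfinj hp
  have := (htree.existsUnique_path u v).unique hq hp
  have hsup : List.map (fun x => g • x) p.support = p.support := by
    have h1 : ((p.map f).copy hu hv).support = p.support := by rw [this]
    rwa [SimpleGraph.Walk.support_copy, SimpleGraph.Walk.support_map] at h1
  exact list_map_eq_self hsup

/-- if `S₁` is a lowest big-tree, `S₂` is a nontrivial subtree, and
`PStab S₁ ∩ PStab S₂` is infinite, then `S₂ ⊆ S₁`; in particular `PStab S₁ ≤ PStab S₂`. -/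
theorem subset_lowestBigTree_of_infinite_inter_pstab {G V : Type*} [Group G] [MulAction G V]
    (T : SimpleGraph V) (htree : T.IsTree)
    (hadj : ∀ (g : G) (u v : V), T.Adj u v ↔ T.Adj (g • u) (g • v))
    (hninv : ¬ ∃ (g : G) (u v : V), T.Adj u v ∧ g • u = v ∧ g • v = u)
    (S₁ S₂ : Set V) (h₁ : IsLowestBigTree G T S₁) (h₂ : IsNontrivialSubtree T S₂)
    (hinf : ((PStab G S₁ ⊓ PStab G S₂ : Subgroup G) : Set G).Infinite) :
    S₂ ⊆ S₁ ∧ PStab G S₁ ≤ PStab G S₂ := by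
  classical
  set H : Subgroup G := PStab G S₁ ⊓ PStab G S₂ with hHdef
  set F : Set V := {v | ∀ g ∈ H, g • v = v} with hFdef
  have hS1F : S₁ ⊆ F := fun v hv g hg => mem_pstab_iff.mp (Subgroup.mem_inf.mp hg).1 v hv
  have hS2F : S₂ ⊆ F := fun v hv g hg => mem_pstab_iff.mp (Subgroup.mem_inf.mp hg).2 v hv
  -- F is a subtree
  obtain ⟨u₀, hu₀⟩ := h₁.1.1.1.1
  have hFne : F.Nonempty := ⟨u₀, hS1F hu₀⟩
  have hFconn : (T.induce F).Connected := by
    rw [SimpleGraph.connected_induce_iff,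
      SimpleGraph.Subgraph.connected_iff_forall_exists_walk_subgraph]
    refine ⟨⟨u₀, by simpa using hS1F hu₀⟩, ?_⟩
    intro u v hu hv
    simp only [SimpleGraph.Subgraph.induce_verts, SimpleGraph.Subgraph.verts_top] at hu hv
    obtain ⟨p0⟩ := htree.isConnected u v
    refine ⟨(p0.toPath : T.Walk u v), ?_⟩
    have hsupp : ∀ w ∈ (p0.toPath : T.Walk u v).support, w ∈ F := by
      intro w hw g hg
      exact fix_path htree hadj (hu g hg) (hv g hg) (p0.toPath.2) w hw
    constructor
    · intro x hx
      simp only [SimpleGraph.Subgraph.induce_verts, SimpleGraph.Subgraph.verts_top]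
      exact hsupp x ((SimpleGraph.Walk.mem_verts_toSubgraph _).mp hx)
    · intro a b hab
      rw [SimpleGraph.Subgraph.induce_adj]
      refine ⟨hsupp a ((SimpleGraph.Walk.mem_verts_toSubgraph _).mp
          ((p0.toPath : T.Walk u v).toSubgraph.edge_vert hab)),
        hsupp b ((SimpleGraph.Walk.mem_verts_toSubgraph _).mp
          ((p0.toPath : T.Walk u v).toSubgraph.edge_vert hab.symm)), ?_⟩
      simpa using (p0.toPath : T.Walk u v).toSubgraph.adj_sub hab
  have hFsubtree : IsSubtree T F := ⟨hFne, hFconn⟩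
  -- H ≤ PStab F
  have hHF : H ≤ PStab G F := fun g hg => mem_pstab_iff.mpr fun v hv => hv g hg
  -- F is a big-tree
  have hFbig : IsBigTree G T F := by
    refine ⟨⟨hFsubtree, ?_⟩, ?_, ?_⟩
    · obtain ⟨_, a, ha, b, hb, hab⟩ := h₁.1.1
      exact ⟨a, hS1F ha, b, hS1F hb, hab⟩
    · exact hinf.mono (SetLike.coe_subset_coe.mpr hHF)
    · rintro ⟨S', hS'tree, hssub, hPeq⟩
      refine hssub.2 fun v hv g hg => ?_
      exact mem_pstab_iff.mp (hPeq ▸ (hHF hg)) v hv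
  -- By lowestness, F = S₁
  have hFeq : F = S₁ := by
    by_contra hne
    exact h₁.2 ⟨F, hFbig, hS1F.ssubset_of_ne (Ne.symm hne)⟩
  have hsub : S₂ ⊆ S₁ := hFeq ▸ hS2F
  exact ⟨hsub, fun g hg => mem_pstab_iff.mpr fun v hv =>
    mem_pstab_iff.mp hg v (hsub hv)⟩
end

section
/- Let A, B, C be groups, let ι_A : C → A and ι_B : C → B be injective homomorphisms, and let G = A ∗_C B be the amalgamated free product (the pushout of ι_A and ι_B in the category of groups), with canonical homomorphisms j_A : A → G and j_B : B → G. Let N be a normal subgroup of B, let K be the normal closure of j_B(N) in G, let Ḡ = G/K, and let q : G → Ḡ be the quotient homomorphism. Assume ker(q ∘ j_B) = N. Then: (i) ker(q ∘ j_A) equals the normal closure in A of the set ι_A({c ∈ C : ι_B(c) ∈ N}); and (ii) writing Ā = A/ker(q ∘ j_A), B̄ = B/N and C̄ = C/ker(q ∘ j_A ∘ ι_A), the homomorphisms ι_A and ι_B descend to homomorphisms C̄ → Ā and C̄ → B̄, and the canonical homomorphism from the pushout Ā ∗_C̄ B̄ to Ḡ (induced by the maps Ā → Ḡ and B̄ →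 Ḡ coming from q ∘ j_A and q ∘ j_B) is an isomorphism. -/
universe u

/-- `(G, jA, jB)` is the amalgamated free product `A ∗_C B` over `ιA : C →* A` and
`ιB : C →* B`, i.e. the pushout of `ιA` and `ιB` in the category of groups, with canonical
homomorphisms `jA : A →* G` and `jB : B →* G`. -/
def IsAmalgamatedProduct {A B C G : Type u} [Group A] [Group B] [Group C] [Group G]
    (ιA : C →* A) (ιB : C →* B) (jA : A →* G) (jB : B →* G) : Prop :=
  jA.comp ιA = jB.comp ιB ∧
    ∀ {H : Type u} [Group H] (fA : A →* H) (fB : B →* H),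
      fA.comp ιA = fB.comp ιB → ∃! h : G →* H, h.comp jA = fA ∧ h.comp jB = fB

/-- The two-element family of groups used to build a binary pushout from `Monoid.PushoutI`. -/
def AmalgFam (A B : Type u) : Bool → Type u
  | true => A
  | false => B

instance amalgFamGroup (A B : Type u) [Group A] [Group B] : ∀ b, Group (AmalgFam A B b)
  | true => inferInstanceAs (Group A)
  | false => inferInstanceAs (Group B)

/-- The two maps from the base group into the family. -/
def amalgPhi {A B C : Type u} [Group A] [Group B] [Group C] (ιA : C →* A) (ιB : C →* B) :
    ∀ b, C →* AmalgFam A B b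
  | true => ιA
  | false => ιB

/-- let `G = A ∗_C B`, let `N ⊴ B`, let `K` be the normal closure of `jB(N)` in
`G`, `Ḡ = G/K` and `q : G → Ḡ`, and assume `ker (q ∘ jB) = N`.  Then (i) `ker (q ∘ jA)` is the
normal closure in `A` of `ιA({c : ιB c ∈ N})`; and (ii) `ιA`, `ιB` descend to homomorphisms
`C̄ → Ā`, `C̄ → B̄` (where `Ā = A/ker(q∘jA)`, `B̄ = B/N`, `C̄ = C/ker(q∘jA∘ιA)`), and `Ḡ`,
with the induced maps, is the pushout `Ā ∗_C̄ B̄` (equivalently, the canonical homomorphism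
from the pushout to `Ḡ` is an isomorphism). -/
theorem amalgam_quotient {A B C G : Type u} [Group A] [Group B] [Group C] [Group G]
    (ιA : C →* A) (ιB : C →* B)
    (hιA : Function.Injective ιA) (hιB : Function.Injective ιB)
    (jA : A →* G) (jB : B →* G)
    (hpush : IsAmalgamatedProduct ιA ιB jA jB)
    (N : Subgroup B) [N.Normal]
    (hker : ((QuotientGroup.mk' (Subgroup.normalClosure
        ((N.map jB : Subgroup G) : Set G))).comp jB).ker = N) :
    ((QuotientGroup.mk' (Subgroup.normalClosure
          ((N.map jB : Subgroup G) : Set G))).comp jA).ker =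
        Subgroup.normalClosure (⇑ιA '' {c : C | ιB c ∈ N}) ∧
      ∃ (ιA' : C ⧸ ((QuotientGroup.mk' (Subgroup.normalClosure
              ((N.map jB : Subgroup G) : Set G))).comp (jA.comp ιA)).ker →*
            A ⧸ ((QuotientGroup.mk' (Subgroup.normalClosure
              ((N.map jB : Subgroup G) : Set G))).comp jA).ker)
        (ιB' : C ⧸ ((QuotientGroup.mk' (Subgroup.normalClosure
              ((N.map jB : Subgroup G) : Set G))).comp (jA.comp ιA)).ker →* B ⧸ N)
        (jA' : A ⧸ ((QuotientGroup.mk' (Subgroup.normalClosure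
              ((N.map jB : Subgroup G) : Set G))).comp jA).ker →*
            G ⧸ Subgroup.normalClosure ((N.map jB : Subgroup G) : Set G))
        (jB' : B ⧸ N →* G ⧸ Subgroup.normalClosure ((N.map jB : Subgroup G) : Set G)),
        (∀ c : C, ιA' (QuotientGroup.mk c) = QuotientGroup.mk (ιA c)) ∧
        (∀ c : C, ιB' (QuotientGroup.mk c) = QuotientGroup.mk (ιB c)) ∧
        (∀ a : A, jA' (QuotientGroup.mk a) = QuotientGroup.mk (jA a)) ∧
        (∀ b : B, jB' (QuotientGroup.mk b) = QuotientGroup.mk (jB b)) ∧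
        IsAmalgamatedProduct ιA' ιB' jA' jB' := by
  classical
  obtain ⟨hcomm, huniv⟩ := hpush
  set K : Subgroup G := Subgroup.normalClosure ((N.map jB : Subgroup G) : Set G) with hKdef
  set q : G →* G ⧸ K := QuotientGroup.mk' K with hqdef
  set qA : A →* G ⧸ K := q.comp jA with hqAdef
  set qB : B →* G ⧸ K := q.comp jB with hqBdef
  set qC : C →* G ⧸ K := q.comp (jA.comp ιA) with hqCdef
  -- basic facts
  have hq_mk : ∀ g : G, q g = QuotientGroup.mk g := fun g => rfl
  have hq_one : ∀ g : G, q g = 1 ↔ g ∈ K := fun g => QuotientGroup.eq_one_iff g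
  have hqBN : ∀ b : B, qB b = 1 ↔ b ∈ N := by
    intro b
    constructor
    · intro hb; rw [← hker]; exact hb
    · intro hb
      have : b ∈ qB.ker := by rw [hqBdef, hker]; exact hb
      exact this
  have hcomm' : ∀ c : C, qA (ιA c) = qB (ιB c) := by
    intro c
    have h0 := DFunLike.congr_fun hcomm c
    show q (jA (ιA c)) = q (jB (ιB c))
    simp only [MonoidHom.comp_apply] at h0
    rw [h0]
  have hqC_eq : ∀ c : C, qC c = qA (ιA c) := fun c => rfl
  have hCsub : ∀ c : C, qC c = 1 ↔ ιB c ∈ N := by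
    intro c
    rw [hqC_eq, hcomm', hqBN]
  -- the normal closure in A
  set M : Subgroup A := Subgroup.normalClosure (⇑ιA '' {c : C | ιB c ∈ N}) with hMdef
  -- easy inclusion
  have hMle : M ≤ qA.ker := by
    apply Subgroup.normalClosure_le_normal
    rintro x ⟨c, hc, rfl⟩
    have : qA (ιA c) = 1 := by rw [hcomm']; exact (hqBN _).2 hc
    exact this
  -- hard inclusion via a concrete pushout
  have halpha : ∀ c ∈ qC.ker, ιA c ∈ M := by
    intro c hc
    exact Subgroup.subset_normalClosure ⟨c, (hCsub c).1 hc, rfl⟩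
  have hbeta : ∀ c ∈ qC.ker, ιB c ∈ N := fun c hc => (hCsub c).1 hc
  let α : C ⧸ qC.ker →* A ⧸ M := QuotientGroup.map qC.ker M ιA halpha
  let β : C ⧸ qC.ker →* B ⧸ N := QuotientGroup.map qC.ker N ιB hbeta
  have hα_mk : ∀ c : C, α (QuotientGroup.mk c) = QuotientGroup.mk (ιA c) := fun c => rfl
  have hβ_mk : ∀ c : C, β (QuotientGroup.mk c) = QuotientGroup.mk (ιB c) := fun c => rfl
  have hαinj : Function.Injective α := by
    rw [injective_iff_map_eq_one]
    intro x
    induction x using QuotientGroup.induction_on with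
    | H c =>
      intro hx
      rw [hα_mk] at hx
      have h1 : ιA c ∈ M := (QuotientGroup.eq_one_iff _).1 hx
      have h2 : qA (ιA c) = 1 := hMle h1
      have h3 : c ∈ qC.ker := by rw [MonoidHom.mem_ker, hqC_eq]; exact h2
      exact (QuotientGroup.eq_one_iff _).2 h3
  have hβinj : Function.Injective β := by
    rw [injective_iff_map_eq_one]
    intro x
    induction x using QuotientGroup.induction_on with
    | H c =>
      intro hx
      rw [hβ_mk] at hx
      have h1 : ιB c ∈ N := (QuotientGroup.eq_one_iff _).1 hx
      have h3 : c ∈ qC.ker := by rw [MonoidHom.mem_ker]; exact (hCsub c).2 h1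
      exact (QuotientGroup.eq_one_iff _).2 h3
  have hφinj : ∀ b : Bool, Function.Injective (amalgPhi α β b) := by
    intro b; cases b
    · exact hβinj
    · exact hαinj
  -- the pushout
  have part1 : qA.ker = M := by
    refine le_antisymm ?_ hMle
    set fA : A →* Monoid.PushoutI (amalgPhi α β) :=
      (Monoid.PushoutI.of (φ := amalgPhi α β) true).comp (QuotientGroup.mk' M) with hfAdef
    set fB : B →* Monoid.PushoutI (amalgPhi α β) :=
      (Monoid.PushoutI.of (φ := amalgPhi α β) false).comp (QuotientGroup.mk' N) with hfBdef
    have hfcomm : fA.comp ιA = fB.comp ιB := by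
      ext c
      show Monoid.PushoutI.of (φ := amalgPhi α β) true (QuotientGroup.mk (ιA c))
          = Monoid.PushoutI.of (φ := amalgPhi α β) false (QuotientGroup.mk (ιB c))
      calc Monoid.PushoutI.of (φ := amalgPhi α β) true (QuotientGroup.mk (ιA c))
          = Monoid.PushoutI.of (φ := amalgPhi α β) true
              (amalgPhi α β true (QuotientGroup.mk c)) := rfl
        _ = Monoid.PushoutI.base (amalgPhi α β) (QuotientGroup.mk c) :=
              Monoid.PushoutI.of_apply_eq_base (amalgPhi α β) true (QuotientGroup.mk c)
        _ = Monoid.PushoutI.of (φ := amalgPhi α β) false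
              (amalgPhi α β false (QuotientGroup.mk c)) :=
              (Monoid.PushoutI.of_apply_eq_base (amalgPhi α β) false (QuotientGroup.mk c)).symm
        _ = Monoid.PushoutI.of (φ := amalgPhi α β) false (QuotientGroup.mk (ιB c)) := rfl
    obtain ⟨h, ⟨hhA, hhB⟩, -⟩ := huniv fA fB hfcomm
    have hKh : K ≤ h.ker := by
      show Subgroup.normalClosure ((N.map jB : Subgroup G) : Set G) ≤ h.ker
      apply Subgroup.normalClosure_le_normal
      rintro x ⟨b, hb, rfl⟩
      have h1 : h (jB b) = fB b := DFunLike.congr_fun hhB b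
      have h2 : fB b = 1 := by
        show Monoid.PushoutI.of (φ := amalgPhi α β) false (QuotientGroup.mk b) = 1
        rw [(QuotientGroup.eq_one_iff b).2 hb]
        exact map_one (Monoid.PushoutI.of (φ := amalgPhi α β) false)
      exact MonoidHom.mem_ker.2 (h1.trans h2)
    intro a ha
    have h1 : jA a ∈ K := (hq_one (jA a)).1 ha
    have h2 : h (jA a) = 1 := hKh h1
    have h3 : fA a = 1 := (DFunLike.congr_fun hhA a).symm.trans h2
    have h4 : Monoid.PushoutI.of (φ := amalgPhi α β) true (QuotientGroup.mk a)
        = Monoid.PushoutI.of (φ := amalgPhi α β) true 1 := by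
      rw [map_one]; exact h3
    have h5 : (QuotientGroup.mk a : A ⧸ M) = 1 :=
      Monoid.PushoutI.of_injective hφinj true h4
    exact (QuotientGroup.eq_one_iff a).1 h5
  -- part (ii)
  refine ⟨part1, ?_⟩
  have hιA'le : ∀ c ∈ qC.ker, ιA c ∈ qA.ker := by
    intro c hc
    rw [MonoidHom.mem_ker] at hc ⊢
    rw [← hqC_eq]; exact hc
  refine ⟨QuotientGroup.map qC.ker qA.ker ιA hιA'le, β,
    QuotientGroup.kerLift qA, QuotientGroup.lift N qB (fun b hb => (hqBN b).2 hb),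
    fun c => rfl, hβ_mk, fun a => rfl, fun b => rfl, ?_, ?_⟩
  · -- commutativity
    ext c
    show QuotientGroup.kerLift qA (QuotientGroup.mk (ιA c))
        = QuotientGroup.lift N qB (fun b hb => (hqBN b).2 hb) (QuotientGroup.mk (ιB c))
    show qA (ιA c) = qB (ιB c)
    exact hcomm' c
  · -- universal property
    intro H' _inst fA fB hfc
    set FA : A →* H' := fA.comp (QuotientGroup.mk' qA.ker) with hFAdef
    set FB : B →* H' := fB.comp (QuotientGroup.mk' N) with hFBdef
    have hFc : FA.comp ιA = FB.comp ιB := by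
      ext c
      show fA (QuotientGroup.mk (ιA c)) = fB (QuotientGroup.mk (ιB c))
      exact DFunLike.congr_fun hfc (QuotientGroup.mk c)
    obtain ⟨h, ⟨hhA, hhB⟩, huq⟩ := huniv FA FB hFc
    have hKh : K ≤ h.ker := by
      show Subgroup.normalClosure ((N.map jB : Subgroup G) : Set G) ≤ h.ker
      apply Subgroup.normalClosure_le_normal
      rintro x ⟨b, hb, rfl⟩
      have h1 : h (jB b) = FB b := DFunLike.congr_fun hhB b
      have h2 : FB b = 1 := by
        show fB (QuotientGroup.mk b) = 1
        rw [(QuotientGroup.eq_one_iff b).2 hb, map_one]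
      exact MonoidHom.mem_ker.2 (h1.trans h2)
    refine ⟨QuotientGroup.lift K h hKh, ⟨?_, ?_⟩, ?_⟩
    · ext a
      show QuotientGroup.lift K h hKh
          (QuotientGroup.kerLift qA (QuotientGroup.mk a)) = fA (QuotientGroup.mk a)
      show h (jA a) = fA (QuotientGroup.mk a)
      exact DFunLike.congr_fun hhA a
    · ext b
      show QuotientGroup.lift K h hKh
          (QuotientGroup.lift N qB (fun b hb => (hqBN b).2 hb) (QuotientGroup.mk b))
          = fB (QuotientGroup.mk b)
      show h (jB b) = fB (QuotientGroup.mk b)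
      exact DFunLike.congr_fun hhB b
    · intro h2 hh2
      obtain ⟨h2A, h2B⟩ := hh2
      have key : h2.comp q = h := by
        apply huq
        constructor
        · ext a
          show h2 (q (jA a)) = fA (QuotientGroup.mk a)
          exact DFunLike.congr_fun h2A (QuotientGroup.mk a)
        · ext b
          show h2 (q (jB b)) = fB (QuotientGroup.mk b)
          exact DFunLike.congr_fun h2B (QuotientGroup.mk b)
      ext g
      show h2 (q g) = h g
      exact DFunLike.congr_fun key g
end

section
/- For every g ∈ G such that φ(A₁)^{φ(g)} ∩ φ(A₂) is infinite, there exists g' ∈ G with φ(g') = φ(g) and φ(A₁^{g'} ∩ A₂) = φ(A₁)^{φ(g)} ∩ φ(A₂). -/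
/-- Conjugation of a subgroup: `conjPow H g = H^g = g⁻¹ H g`. -/
def conjPow {G : Type*} [Group G] (H : Subgroup G) (g : G) : Subgroup G :=
  H.map (MulAut.conj g⁻¹).toMonoidHom

/-- The double coset `P x Q = {p * x * q : p ∈ P, q ∈ Q}`. -/
def doubleCoset {G : Type*} [Group G] (P : Subgroup G) (x : G) (Q : Subgroup G) : Set G :=
  {y | ∃ p ∈ P, ∃ q ∈ Q, y = p * x * q}

lemma mem_conjPow {G : Type*} [Group G] {H : Subgroup G} {a x : G} :
    x ∈ conjPow H a ↔ a * x * a⁻¹ ∈ H := by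
  simp only [conjPow, Subgroup.mem_map, MulEquiv.coe_toMonoidHom, MulAut.conj_apply]
  constructor
  · rintro ⟨h, hh, rfl⟩
    rw [show a * (a⁻¹ * h * a⁻¹⁻¹) * a⁻¹ = h by group]
    exact hh
  · intro h
    exact ⟨a * x * a⁻¹, h, by group⟩

lemma conjPow_mul {G : Type*} [Group G] (H : Subgroup G) (a b : G) :
    conjPow H (a * b) = conjPow (conjPow H a) b := by
  ext x
  simp only [mem_conjPow]
  rw [show a * (b * x * b⁻¹) * a⁻¹ = a * b * x * (a * b)⁻¹ by group]

lemma conjPow_of_mem {G : Type*} [Group G] {H : Subgroup G} {a : G} (ha : a ∈ H) :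
    conjPow H a = H := by
  ext x
  rw [mem_conjPow]
  constructor
  · intro h
    have := H.mul_mem (H.mul_mem (H.inv_mem ha) h) ha
    simpa [mul_assoc] using this
  · intro h
    exact H.mul_mem (H.mul_mem ha h) (H.inv_mem ha)

lemma conjPow_mul_of_mem {G : Type*} [Group G] {H : Subgroup G} {a : G} (ha : a ∈ H) (b : G) :
    conjPow H (a * b) = conjPow H b := by
  rw [conjPow_mul, conjPow_of_mem ha]

lemma conjPow_inf {G : Type*} [Group G] (H K : Subgroup G) (a : G) :
    conjPow (H ⊓ K) a = conjPow H a ⊓ conjPow K a := by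
  ext x
  simp [mem_conjPow, Subgroup.mem_inf]

lemma map_conjPow {G Gb : Type*} [Group G] [Group Gb] (φ : G →* Gb)
    (H : Subgroup G) (a : G) :
    (conjPow H a).map φ = conjPow (H.map φ) (φ a) := by
  ext x
  simp only [Subgroup.mem_map, mem_conjPow]
  constructor
  · rintro ⟨y, hy, rfl⟩
    exact ⟨a * y * a⁻¹, hy, by rw [map_mul, map_mul, map_inv]⟩
  · rintro ⟨h, hh, heq⟩
    refine ⟨a⁻¹ * h * a, ?_, ?_⟩
    · rw [show a * (a⁻¹ * h * a) * a⁻¹ = h by group]; exact hh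
    · rw [map_mul, map_mul, map_inv, heq]; group

/-- under hypotheses (a) and (b), for every `g ∈ G` with
`φ(A₁)^{φ(g)} ∩ φ(A₂)` infinite there is `g'` with `φ(g') = φ(g)` and
`φ(A₁^{g'} ∩ A₂) = φ(A₁)^{φ(g)} ∩ φ(A₂)`. -/
theorem exists_rep_of_infinite_inter_image {G Gb : Type*} [Group G] [Group Gb]
    (φ : G →* Gb) (A₁ A₂ : Subgroup G) {I : Type*} (g : I → G)
    (ha : ∀ i : I, (conjPow A₁ (g i) ⊓ A₂).map φ =
      conjPow (A₁.map φ) (φ (g i)) ⊓ A₂.map φ)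
    (hb : ∀ x : G,
      ((conjPow (A₁.map φ) (φ x) ⊓ A₂.map φ : Subgroup Gb) : Set Gb).Infinite →
      ∃ i : I, doubleCoset (A₁.map φ) (φ x) (A₂.map φ) =
        doubleCoset (A₁.map φ) (φ (g i)) (A₂.map φ)) :
    ∀ x : G,
      ((conjPow (A₁.map φ) (φ x) ⊓ A₂.map φ : Subgroup Gb) : Set Gb).Infinite →
      ∃ x' : G, φ x' = φ x ∧
        (conjPow A₁ x' ⊓ A₂).map φ = conjPow (A₁.map φ) (φ x) ⊓ A₂.map φ := by
  intro x hx
  obtain ⟨i, hi⟩ := hb x hx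
  have hxmem : φ x ∈ doubleCoset (A₁.map φ) (φ x) (A₂.map φ) :=
    ⟨1, one_mem _, 1, one_mem _, by group⟩
  rw [hi] at hxmem
  obtain ⟨p, hp, q, hq, hpq⟩ := hxmem
  obtain ⟨a₁, ha₁, rfl⟩ := hp
  obtain ⟨a₂, ha₂, rfl⟩ := hq
  refine ⟨a₁ * g i * a₂, ?_, ?_⟩
  · rw [map_mul, map_mul, ← hpq]
  · have key : conjPow A₁ (a₁ * g i * a₂) ⊓ A₂ = conjPow (conjPow A₁ (g i) ⊓ A₂) a₂ := by
      rw [conjPow_inf, mul_assoc, conjPow_mul_of_mem ha₁, ← conjPow_mul,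
        conjPow_of_mem ha₂]
    rw [key, map_conjPow, ha i, conjPow_inf, conjPow_of_mem (Subgroup.mem_map_of_mem φ ha₂)]
    congr 1
    rw [← conjPow_mul, hpq, mul_assoc, conjPow_mul_of_mem (Subgroup.mem_map_of_mem φ ha₁)]
end

section
/- In H = BS(1,2), for every n ∈ ℕ the subgroup t⁻ⁿ ⟨of(a)⟩ tⁿ is properly contained in t⁻⁽ⁿ⁺¹⁾ ⟨of(a)⟩ tⁿ⁺¹. Consequently, for every d ∈ ℕ there is a strictly increasing chain L₁ < L₂ < ⋯ < L_d of subgroups of H in which each L_i is a conjugate of ⟨of(a)⟩ (in particular an intersection of finitely many conjugates of ⟨of(a)⟩); hence the collection {⟨of(a)⟩} has infinite commensurable depth in BS(1,2). -/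
/-- Let `C = ⟨a⟩` be infinite cyclic, `B = ⟨a²⟩`, and `φ : C ≃ B` the isomorphism
with `φ(a) = a²`.  In the HNN extension `H = BS(1,2)` of `C` over `φ` (with stable letter `t`
and relations `t x t⁻¹ = φ(x)`), the subgroup `t⁻ⁿ ⟨of a⟩ tⁿ` is properly contained in
`t⁻⁽ⁿ⁺¹⁾ ⟨of a⟩ tⁿ⁺¹` for every `n`.  Consequently, for every `d` there is a strictly
increasing chain of `d` subgroups of `H`, each a conjugate of `⟨of a⟩`; hence `{⟨of a⟩}` has
infinite commensurable depth in `BS(1,2)`. -/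
theorem bs12_infinite_commensurable_depth {C : Type*} [Group C] (a : C)
    (hgen : ∀ x : C, x ∈ Subgroup.zpowers a) (hord : ¬ IsOfFinOrder a)
    (φ : (⊤ : Subgroup C) ≃* Subgroup.zpowers (a ^ 2))
    (hφ : ((φ ⟨a, Subgroup.mem_top a⟩ : Subgroup.zpowers (a ^ 2)) : C) = a ^ 2) :
    (∀ n : ℕ,
      (Subgroup.zpowers
            ((HNNExtension.of a : HNNExtension C ⊤ (Subgroup.zpowers (a ^ 2)) φ))).map
          (MulAut.conj ((HNNExtension.t : HNNExtension C ⊤ (Subgroup.zpowers (a ^ 2)) φ)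
              ^ n)⁻¹).toMonoidHom <
        (Subgroup.zpowers
            ((HNNExtension.of a : HNNExtension C ⊤ (Subgroup.zpowers (a ^ 2)) φ))).map
          (MulAut.conj ((HNNExtension.t : HNNExtension C ⊤ (Subgroup.zpowers (a ^ 2)) φ)
              ^ (n + 1))⁻¹).toMonoidHom) ∧
    ∀ d : ℕ, ∃ L : Fin d → Subgroup (HNNExtension C ⊤ (Subgroup.zpowers (a ^ 2)) φ),
      StrictMono L ∧ ∀ i : Fin d, ∃ g : HNNExtension C ⊤ (Subgroup.zpowers (a ^ 2)) φ,
        L i = (Subgroup.zpowers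
            ((HNNExtension.of a : HNNExtension C ⊤ (Subgroup.zpowers (a ^ 2)) φ))).map
          (MulAut.conj g).toMonoidHom := by
  set H := HNNExtension C ⊤ (Subgroup.zpowers (a ^ 2)) φ
  set t : H := HNNExtension.t
  set oa : H := HNNExtension.of a
  -- the basic relation: t * oa * t⁻¹ = oa ^ 2
  have hrel : t * oa * t⁻¹ = oa ^ 2 := by
    have := (HNNExtension.equiv_eq_conj (G := C) (A := (⊤ : Subgroup C))
      (B := Subgroup.zpowers (a ^ 2)) (φ := φ) ⟨a, Subgroup.mem_top a⟩).symm
    rw [hφ, map_pow] at this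
    exact this
  -- the key step: ⟨oa⟩ < t⁻¹ ⟨oa⟩ t
  have hstep : Subgroup.zpowers oa < (Subgroup.zpowers oa).map (MulAut.conj t⁻¹).toMonoidHom := by
    have hoa : oa = t⁻¹ * oa ^ 2 * t := by
      rw [← hrel]; group
    have hoa' : oa = t⁻¹ * oa ^ (2 : ℤ) * t := by
      rw [zpow_two, ← pow_two]; exact hoa
    constructor
    · rintro x ⟨k, rfl⟩
      refine ⟨(oa ^ (2 : ℤ)) ^ k,
        Subgroup.zpow_mem _ (Subgroup.zpow_mem _ (Subgroup.mem_zpowers oa) 2) k, ?_⟩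
      simp only [MulAut.conj_apply, MulEquiv.coe_toMonoidHom, inv_inv]
      have h : (t⁻¹ * oa ^ (2 : ℤ) * (t⁻¹)⁻¹) ^ k = t⁻¹ * (oa ^ (2 : ℤ)) ^ k * (t⁻¹)⁻¹ :=
        conj_zpow
      rw [inv_inv] at h ⊢
      rw [← h, ← hoa']
    · intro hle
      have hmem : t⁻¹ * oa * t ∈ Subgroup.zpowers oa := by
        apply hle
        refine ⟨oa, Subgroup.mem_zpowers oa, ?_⟩
        simp [MulAut.conj_apply, mul_assoc]
      obtain ⟨k, hk⟩ := hmem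
      simp only at hk
      have h1 : oa = (oa ^ 2) ^ k := by
        calc oa = t * (t⁻¹ * oa * t) * t⁻¹ := by group
          _ = t * oa ^ k * t⁻¹ := by rw [hk]
          _ = (t * oa * t⁻¹) ^ k := conj_zpow.symm
          _ = (oa ^ 2) ^ k := by rw [hrel]
      have h3 : (HNNExtension.of (a ^ (2 * k)) : H) = HNNExtension.of a := by
        rw [map_zpow]
        rw [show ((HNNExtension.of : C →* H) a) ^ (2 * k) = ((HNNExtension.of a : H) ^ (2:ℤ)) ^ k by
          rw [← zpow_mul]]
        rw [show ((HNNExtension.of a : H) ^ (2:ℤ)) = oa ^ (2:ℕ) by norm_cast]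
        exact h1.symm
      have h4 : a ^ (2 * k) = a := HNNExtension.of_injective (G := C) (A := (⊤ : Subgroup C)) (B := Subgroup.zpowers (a ^ 2)) (φ := φ) h3
      have h5 : a ^ (2 * k - 1) = 1 := by
        rw [sub_eq_add_neg, zpow_add, h4, zpow_neg_one, mul_inv_cancel]
      have hne : (2 * k - 1 : ℤ) ≠ 0 := by omega
      exact hord (isOfFinOrder_iff_zpow_eq_one.mpr ⟨2 * k - 1, hne, h5⟩)
  -- now transport along powers of t
  set F : ℕ → Subgroup H := fun n =>
    (Subgroup.zpowers oa).map (MulAut.conj (t ^ n)⁻¹).toMonoidHom with hF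
  have hFsucc : ∀ n, F n < F (n + 1) := by
    intro n
    have hcomp : ∀ S : Subgroup H,
        S.map (MulAut.conj (t ^ (n + 1))⁻¹).toMonoidHom =
        (S.map (MulAut.conj t⁻¹).toMonoidHom).map (MulAut.conj (t ^ n)⁻¹).toMonoidHom := by
      intro S
      rw [Subgroup.map_map]
      congr 1
      refine MonoidHom.ext fun x => ?_
      simp only [MulEquiv.coe_toMonoidHom, MonoidHom.coe_comp, Function.comp_apply,
        MulAut.conj_apply, MulAut.conj_inv_apply]
      simp only [pow_succ', mul_inv_rev, inv_inv, mul_assoc]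
    have hinj : Function.Injective (MulAut.conj (t ^ n)⁻¹).toMonoidHom :=
      (MulAut.conj ((t ^ n)⁻¹)).injective
    have key : F (n + 1) =
        ((Subgroup.zpowers oa).map (MulAut.conj t⁻¹).toMonoidHom).map
          (MulAut.conj (t ^ n)⁻¹).toMonoidHom := hcomp _
    have key0 : F n = (Subgroup.zpowers oa).map (MulAut.conj (t ^ n)⁻¹).toMonoidHom := rfl
    rw [key0, key]
    exact ⟨(Subgroup.map_le_map_iff_of_injective hinj).mpr hstep.le,
      fun hle => hstep.not_ge ((Subgroup.map_le_map_iff_of_injective hinj).mp hle)⟩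
  refine ⟨hFsucc, ?_⟩
  intro d
  refine ⟨fun i => F i, ?_, fun i => ⟨(t ^ (i : ℕ))⁻¹, rfl⟩⟩
  intro i j hij
  exact strictMono_nat_of_lt_succ hFsucc hij
end

section
/- Let S̄₁ ⊆ S̄₂ be finite subtrees of T̄ with PStab(S̄₂) infinite, and let S₁ be a finite subtree of T such that f restricts to an isomorphism of induced subgraphs from S₁ onto S̄₁ and φ(PStab(S₁)) = PStab(S̄₁). Then there exists a finite subtree S₂ of T with S₁ ⊆ S₂ such that f restricts to an isomorphism of induced subgraphs from S₂ onto S̄₂ and φ(PStab(S₂)) = PStab(S̄₂). -/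
open MulAction Pointwise

/-- `f` restricts to an isomorphism of induced subgraphs from `S` onto `S'`:
it maps `S` bijectively onto `S'`, preserving and reflecting adjacency. -/
def RestrictsToIso {V W : Type*} (T : SimpleGraph V) (T' : SimpleGraph W)
    (f : V → W) (S : Set V) (S' : Set W) : Prop :=
  Set.BijOn f S S' ∧ ∀ u ∈ S, ∀ v ∈ S, (T.Adj u v ↔ T'.Adj (f u) (f v))

lemma PStab_insert (G : Type*) [Group G] {V : Type*} [MulAction G V] (w : V) (S : Set V) :
    PStab G (insert w S) = MulAction.stabilizer G w ⊓ PStab G S := by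
  rw [PStab, PStab, iInf_insert]

lemma PStab_anti (G : Type*) [Group G] {V : Type*} [MulAction G V] {S S' : Set V}
    (h : S ⊆ S') : PStab G S' ≤ PStab G S :=
  le_iInf₂ fun _ hv => biInf_le _ (h hv)

lemma PStab_le_stab (G : Type*) [Group G] {V : Type*} [MulAction G V] {S : Set V}
    {v : V} (h : v ∈ S) : PStab G S ≤ MulAction.stabilizer G v :=
  biInf_le _ h

lemma inf_helper {α : Type*} [Lattice α] {a b c : α} (h : c ≤ a) : (a ⊓ b) ⊓ c = b ⊓ c := by
  rw [inf_assoc]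
  exact inf_eq_right.mpr (inf_le_right.trans h)

lemma tree_unique_nbr {Vb : Type*} {Tb : SimpleGraph Vb} (ht : Tb.IsTree)
    {a b w : Vb} (ha : Tb.Adj a w) (hb : Tb.Adj b w)
    (p : Tb.Walk a b) (hw : w ∉ p.support) : a = b := by
  classical
  by_contra hab
  have hq : w ∉ p.bypass.support := fun h => hw (p.support_bypass_subset h)
  have hqp : p.bypass.IsPath := p.bypass_isPath
  set r : Tb.Walk a b := SimpleGraph.Walk.cons ha (SimpleGraph.Walk.cons hb.symm .nil) with hr
  have hrp : r.IsPath := by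
    rw [SimpleGraph.Walk.isPath_def]
    simp [hr, ha.ne, hab, hb.ne']
  obtain ⟨P, -, hUniq⟩ := ht.existsUnique_path a b
  have h1 := hUniq _ hqp
  have h2 := hUniq _ hrp
  apply hq
  rw [h1, ← h2, hr]
  simp

lemma boundary_vertex {Vb : Type*} (Tb : SimpleGraph Vb) {S1 S2 : Set Vb}
    (hsub : S1 ⊆ S2) (hconn : (Tb.induce S2).Connected) (hne : S1.Nonempty)
    {x : Vb} (hx : x ∈ S2) (hxn : x ∉ S1) :
    ∃ v ∈ S1, ∃ w ∈ S2, w ∉ S1 ∧ Tb.Adj v w := by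
  obtain ⟨y, hy⟩ := hne
  obtain ⟨p⟩ := hconn ⟨y, hsub hy⟩ ⟨x, hx⟩
  have key : ∀ (a b : ↥S2), (Tb.induce S2).Walk a b → a.1 ∈ S1 → b.1 ∉ S1 →
      ∃ v ∈ S1, ∃ w ∈ S2, w ∉ S1 ∧ Tb.Adj v w := by
    intro a b p
    induction p with
    | nil => intro h1 h2; exact absurd h1 h2
    | @cons a c b h q ih =>
      intro ha hb
      by_cases hc : c.1 ∈ S1
      · exact ih hc hb
      · exact ⟨a.1, ha, c.1, c.2, hc, h⟩
  exact key _ _ p hy hxn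

lemma insert_connected {V : Type*} (T : SimpleGraph V) {S : Set V}
    (hconn : (T.induce S).Connected) {v w : V} (hv : v ∈ S) (hadj : T.Adj v w) :
    (T.induce (insert w S)).Connected := by
  have hvm : v ∈ insert w S := Set.mem_insert_of_mem _ hv
  have key : ∀ a : ↥(insert w S), (T.induce (insert w S)).Reachable a ⟨v, hvm⟩ := by
    rintro ⟨a, ha⟩
    rcases ha with rfl | haS
    · exact SimpleGraph.Adj.reachable (by exact hadj.symm)
    · have r : (T.induce S).Reachable ⟨a, haS⟩ ⟨v, hv⟩ := hconn _ _
      have := r.map (T.induceHomOfLE (Set.subset_insert w S)).toHom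
      exact this
  constructor
  intro a b
  exact (key a).trans (key b).symm

/-- lifting of finite subtrees with prescribed pointwise stabilizers along a
quotient of graphs of groups. -/
theorem lift_finite_subtree {G Gb V Vb : Type*} [Group G] [Group Gb]
    [MulAction G V] [MulAction Gb Vb]
    (T : SimpleGraph V) (Tb : SimpleGraph Vb)
    (htree : T.IsTree) (htreeb : Tb.IsTree)
    (hadj : ∀ (g : G) (u v : V), T.Adj u v ↔ T.Adj (g • u) (g • v))
    (hninv : ¬ ∃ (g : G) (u v : V), T.Adj u v ∧ g • u = v ∧ g • v = u)
    (hadjb : ∀ (g : Gb) (u v : Vb), Tb.Adj u v ↔ Tb.Adj (g • u) (g • v))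
    (hninvb : ¬ ∃ (g : Gb) (u v : Vb), Tb.Adj u v ∧ g • u = v ∧ g • v = u)
    (φ : G →* Gb) (hφ : Function.Surjective φ) (f : V → Vb)
    -- (i) f maps adjacent vertices to adjacent vertices
    (h1 : ∀ u v : V, T.Adj u v → Tb.Adj (f u) (f v))
    -- (ii) f is equivariant
    (h2 : ∀ (g : G) (v : V), f (g • v) = φ g • f v)
    -- (iii) φ maps vertex stabilizers onto vertex stabilizers
    (h3 : ∀ v : V, (MulAction.stabilizer G v).map φ = MulAction.stabilizer Gb (f v))
    -- (iv) φ maps edge pointwise-stabilizers onto edge pointwise-stabilizers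
    (h4 : ∀ u v : V, T.Adj u v →
      (MulAction.stabilizer G u ⊓ MulAction.stabilizer G v).map φ =
        MulAction.stabilizer Gb (f u) ⊓ MulAction.stabilizer Gb (f v))
    -- (v) edges at f v lift to edges at v
    (h5 : ∀ (v : V) (wb : Vb), Tb.Adj (f v) wb → ∃ w : V, T.Adj v w ∧ f w = wb)
    -- intersection-lifting hypothesis
    (hlift : ∀ (v u : V), T.Adj v u → ∀ S : Set V, S.Finite → IsSubtree T S → v ∈ S →
      ((((MulAction.stabilizer G v ⊓ MulAction.stabilizer G u).map φ ⊓
          (PStab G S).map φ : Subgroup Gb) : Set Gb).Infinite →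
        ∃ g ∈ MulAction.stabilizer G v, φ g = 1 ∧
          (conjSub g (MulAction.stabilizer G v ⊓ MulAction.stabilizer G u) ⊓
            PStab G S).map φ =
          (MulAction.stabilizer G v ⊓ MulAction.stabilizer G u).map φ ⊓ (PStab G S).map φ))
    (Sb1 Sb2 : Set Vb) (hss : Sb1 ⊆ Sb2)
    (hSb1fin : Sb1.Finite) (hSb2fin : Sb2.Finite)
    (hSb1 : IsSubtree Tb Sb1) (hSb2 : IsSubtree Tb Sb2)
    (hinf : ((PStab Gb Sb2 : Subgroup Gb) : Set Gb).Infinite)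
    (S1 : Set V) (hS1fin : S1.Finite) (hS1 : IsSubtree T S1)
    (hiso1 : RestrictsToIso T Tb f S1 Sb1)
    (hps1 : (PStab G S1).map φ = PStab Gb Sb1) :
    ∃ S2 : Set V, S1 ⊆ S2 ∧ S2.Finite ∧ IsSubtree T S2 ∧
      RestrictsToIso T Tb f S2 Sb2 ∧ (PStab G S2).map φ = PStab Gb Sb2 := by
  classical
  clear hninv hninvb htree hadjb hφ h3
  suffices H : ∀ n : ℕ, ∀ (Sb1 : Set Vb) (S1 : Set V),
      Sb1 ⊆ Sb2 → IsSubtree Tb Sb1 →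
      S1.Finite → IsSubtree T S1 →
      RestrictsToIso T Tb f S1 Sb1 → (PStab G S1).map φ = PStab Gb Sb1 →
      (Sb2 \ Sb1).ncard ≤ n →
      ∃ S2 : Set V, S1 ⊆ S2 ∧ S2.Finite ∧ IsSubtree T S2 ∧
        RestrictsToIso T Tb f S2 Sb2 ∧ (PStab G S2).map φ = PStab Gb Sb2 by
    exact H (Sb2 \ Sb1).ncard Sb1 S1 hss hSb1 hS1fin hS1 hiso1 hps1 le_rfl
  intro n
  induction n with
  | zero =>
    intro Sb1 S1 hss hSb1 hS1fin hS1 hiso1 hps1 hcard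
    have hdfin : (Sb2 \ Sb1).Finite := hSb2fin.diff
    rw [Nat.le_zero, Set.ncard_eq_zero hdfin, Set.diff_eq_empty] at hcard
    have heq : Sb1 = Sb2 := subset_antisymm hss hcard
    exact ⟨S1, subset_rfl, hS1fin, hS1, heq ▸ hiso1, heq ▸ hps1⟩
  | succ n ih =>
    intro Sb1 S1 hss hSb1 hS1fin hS1 hiso1 hps1 hcard
    by_cases hsub2 : Sb2 ⊆ Sb1
    · have heq : Sb1 = Sb2 := subset_antisymm hss hsub2
      exact ⟨S1, subset_rfl, hS1fin, hS1, heq ▸ hiso1, heq ▸ hps1⟩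
    obtain ⟨x, hx2, hx1⟩ := Set.not_subset.mp hsub2
    obtain ⟨vb, hvb1, wb, hwb2, hwb1, hadjvw⟩ :=
      boundary_vertex Tb hss hSb2.2 hSb1.1 hx2 hx1
    have himg : f '' S1 = Sb1 := hiso1.1.image_eq
    obtain ⟨v, hvS1, hfv⟩ : ∃ v ∈ S1, f v = vb := by
      rw [← himg] at hvb1
      obtain ⟨v, h1, h2⟩ := hvb1
      exact ⟨v, h1, h2⟩
    obtain ⟨u, hadjvu, hfu⟩ := h5 v wb (by rw [hfv]; exact hadjvw)
    set E := MulAction.stabilizer G v ⊓ MulAction.stabilizer G u with hE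
    have hmapE : E.map φ = MulAction.stabilizer Gb vb ⊓ MulAction.stabilizer Gb wb := by
      rw [hE, h4 v u hadjvu, hfv, hfu]
    have hPle : PStab Gb Sb1 ≤ MulAction.stabilizer Gb vb := PStab_le_stab _ hvb1
    have hPinsb : PStab Gb (insert wb Sb1) = E.map φ ⊓ PStab Gb Sb1 := by
      rw [PStab_insert, hmapE, inf_helper hPle]
    have hsubins : insert wb Sb1 ⊆ Sb2 := Set.insert_subset_iff.mpr ⟨hwb2, hss⟩
    have hInf : ((E.map φ ⊓ (PStab G S1).map φ : Subgroup Gb) : Set Gb).Infinite := by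
      rw [hps1, ← hPinsb]
      exact hinf.mono (SetLike.coe_subset_coe.mpr (PStab_anti Gb hsubins))
    obtain ⟨g, hgv, hφg, hmapeq⟩ := hlift v u hadjvu S1 hS1fin hS1 hvS1 hInf
    set w' := g • u with hw'
    have hgvv : g • v = v := hgv
    have hfw' : f w' = wb := by rw [hw', h2, hφg, one_smul, hfu]
    have hadjvw' : T.Adj v w' := by
      have := (hadj g v u).mp hadjvu
      rwa [hgvv] at this
    have hconj : conjSub g E = MulAction.stabilizer G v ⊓ MulAction.stabilizer G w' := by
      rw [hE, conjSub, Subgroup.map_inf _ _ _ (MulAut.conj g).injective,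
        ← MulAction.stabilizer_smul_eq_stabilizer_map_conj,
        ← MulAction.stabilizer_smul_eq_stabilizer_map_conj, hgvv]
    have hPS1v : PStab G S1 ≤ MulAction.stabilizer G v := PStab_le_stab _ hvS1
    have key : (PStab G (insert w' S1)).map φ = PStab Gb (insert wb Sb1) := by
      have l1 : PStab G (insert w' S1) = conjSub g E ⊓ PStab G S1 := by
        rw [PStab_insert, hconj, inf_helper hPS1v]
      rw [l1, hmapeq, hps1, ← hPinsb]
    have hw'S1 : w' ∉ S1 := by
      intro h
      apply hwb1
      rw [← hfw', ← himg]
      exact Set.mem_image_of_mem f h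
    have hS1' : IsSubtree T (insert w' S1) :=
      ⟨Set.insert_nonempty _ _, insert_connected T hS1.2 hvS1 hadjvw'⟩
    have hSb1' : IsSubtree Tb (insert wb Sb1) :=
      ⟨Set.insert_nonempty _ _, insert_connected Tb hSb1.2 hvb1 hadjvw⟩
    -- adjacency characterization for the new vertex
    have hadjiff : ∀ u1 ∈ S1, (T.Adj u1 w' ↔ Tb.Adj (f u1) wb) := by
      intro u1 hu1
      constructor
      · intro h
        have := h1 _ _ h
        rwa [hfw'] at this
      · intro h
        have hu1b : f u1 ∈ Sb1 := by rw [← himg]; exact Set.mem_image_of_mem f hu1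
        obtain ⟨p⟩ := hSb1.2 ⟨f u1, hu1b⟩ ⟨vb, hvb1⟩
        have hwsupp : wb ∉ (p.map (SimpleGraph.Embedding.induce Sb1).toHom).support := by
          intro hmem
          rw [SimpleGraph.Walk.support_map] at hmem
          obtain ⟨a, _, ha2⟩ := List.mem_map.mp hmem
          apply hwb1
          rw [← ha2]
          exact a.2
        have heqfu : f u1 = vb :=
          tree_unique_nbr htreeb h hadjvw (p.map (SimpleGraph.Embedding.induce Sb1).toHom) hwsupp
        have hu1v : u1 = v := hiso1.1.injOn hu1 hvS1 (by rw [heqfu, hfv])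
        rw [hu1v]
        exact hadjvw'
    have hiso1' : RestrictsToIso T Tb f (insert w' S1) (insert wb Sb1) := by
      constructor
      · refine ⟨?_, ?_, ?_⟩
        · rintro a (rfl | ha)
          · rw [hfw']; exact Set.mem_insert _ _
          · exact Set.mem_insert_of_mem _ (himg ▸ Set.mem_image_of_mem f ha)
        · rw [Set.injOn_insert hw'S1]
          refine ⟨hiso1.1.injOn, ?_⟩
          rw [himg, hfw']
          exact hwb1
        · rw [Set.SurjOn, Set.image_insert_eq, hfw', himg]
      · rintro a (rfl | ha) b (rfl | hb)
        · simp
        · rw [T.adj_comm w' b, Tb.adj_comm (f w') (f b), hfw']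
          exact hadjiff b hb
        · rw [hfw']
          exact hadjiff a ha
        · exact hiso1.2 a ha b hb
    have hcard' : (Sb2 \ insert wb Sb1).ncard ≤ n := by
      have hlt : (Sb2 \ insert wb Sb1).ncard < (Sb2 \ Sb1).ncard := by
        apply Set.ncard_lt_ncard _ hSb2fin.diff
        constructor
        · exact Set.diff_subset_diff_right (Set.subset_insert _ _)
        · intro hsub
          have : wb ∈ Sb2 \ insert wb Sb1 := hsub ⟨hwb2, hwb1⟩
          exact this.2 (Set.mem_insert _ _)
      omega
    obtain ⟨S2, h21, hfin2, hsub2', hiso2, hps2⟩ :=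
      ih (insert wb Sb1) (insert w' S1) hsubins hSb1' (hS1fin.insert _) hS1' hiso1' key hcard'
    exact ⟨S2, (Set.subset_insert _ _).trans h21, hfin2, hsub2', hiso2, hps2⟩
end
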